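/- Let n be a natural number, α : (Fin n → ℝ) → Matrix (Fin n) (Fin n) ℝ be C¹, antisymmetric (α^{jk} = −α^{kj}) and satisfying the Jacobi identity Σ_i (∂_i α^{jk})α^{im} + Σ_i (∂_i α^{km})α^{ij} + Σ_i (∂_i α^{mj})α^{ik} = 0 everywhere. Let X, ξ, ψ : ℝ → (Fin n → ℝ) be differentiable. Define (Aψ)_m(φ) := −ψ_m'(φ) + Σ_{k,s} (∂_m α^{ks})(X(φ))·ξ_s(φ)·ψ_k(φ), (Bψ)^j(φ) := Σ_m α^{jm}(X(φ))·ψ_m(φ), and (A*η)^j(φ) := −(η^j)'(φ) − Σ_{i,s} (∂_i α^{js})(X(φ))·ξ_s(φ)·η^i(φ). Then for every φ and every j: (B(Aψ))^j(φ) − (A*(Bψ))^j(φ) = Σ_{i,m} ( (X^i)'(φ) + Σ_s α^{is}(X(φ))·ξ_s(φ) ) · (∂_i α^{jm})(X(φ)) · ψ_m(φ). -/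

import Mathlib

open scoped BigOperators

/-- The operator `A` of the Poisson sigma-model linear system:
`(Aψ)_m = −ψ_m' + Σ_{k,s} (∂_m α^{ks})(X)·ξ_s·ψ_k`. -/
noncomputable def opA {n : ℕ} (α : (Fin n → ℝ) → Matrix (Fin n) (Fin n) ℝ)
    (X ξ ψ : ℝ → Fin n → ℝ) : ℝ → Fin n → ℝ :=
  fun φ m => -(deriv (fun t => ψ t m) φ)
    + ∑ k, ∑ s, fderiv ℝ (fun y => α y k s) (X φ) (Pi.single m 1) * ξ φ s * ψ φ k

/-- The operator `B` of the Poisson sigma-model linear system: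
`(Bψ)^j = Σ_m α^{jm}(X)·ψ_m`. -/
noncomputable def opB {n : ℕ} (α : (Fin n → ℝ) → Matrix (Fin n) (Fin n) ℝ)
    (X ψ : ℝ → Fin n → ℝ) : ℝ → Fin n → ℝ :=
  fun φ j => ∑ m, α (X φ) j m * ψ φ m

/-- The dual operator `A*`:
`(A*η)^j = −(η^j)' − Σ_{i,s} (∂_i α^{js})(X)·ξ_s·η^i`. -/
noncomputable def opAstar {n : ℕ} (α : (Fin n → ℝ) → Matrix (Fin n) (Fin n) ℝ)
    (X ξ η : ℝ → Fin n → ℝ) : ℝ → Fin n → ℝ :=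
  fun φ j => -(deriv (fun t => η t j) φ)
    - ∑ i, ∑ s, fderiv ℝ (fun y => α y j s) (X φ) (Pi.single i 1) * ξ φ s * η φ i


private lemma psm_sum_swap23 {n : ℕ} (f : Fin n → Fin n → Fin n → ℝ) :
    ∑ a, ∑ b, ∑ c, f a b c = ∑ a, ∑ c, ∑ b, f a b c :=
  Finset.sum_congr rfl fun _ _ => Finset.sum_comm

private lemma psm_sum_rev3 {n : ℕ} (f : Fin n → Fin n → Fin n → ℝ) :
    ∑ a, ∑ b, ∑ c, f a b c = ∑ c, ∑ b, ∑ a, f a b c := by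
  rw [psm_sum_swap23, Finset.sum_comm, psm_sum_swap23]

private lemma psm_sum_cyc3 {n : ℕ} (f : Fin n → Fin n → Fin n → ℝ) :
    ∑ a, ∑ b, ∑ c, f a b c = ∑ b, ∑ c, ∑ a, f a b c := by
  rw [Finset.sum_comm, psm_sum_swap23]

private lemma psm_key_algebra (n : ℕ) (j : Fin n) (a : Fin n → Fin n → ℝ)
    (d : Fin n → Fin n → Fin n → ℝ) (u p q X' : Fin n → ℝ)
    (hkey : ∀ s m : Fin n,
      ∑ i, (a j i * d i m s + d i j s * a i m - a i s * d i j m) = 0) :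
    (∑ m, a j m * (-(q m) + ∑ k, ∑ s, d m k s * u s * p k))
    - (-(∑ m, ((∑ i, X' i * d i j m) * p m + a j m * q m))
       - ∑ i, ∑ s, d i j s * u s * (∑ m, a i m * p m))
    = ∑ i, ∑ m, (X' i + ∑ s, a i s * u s) * d i j m * p m := by
  set A := ∑ s, ∑ m, ∑ i, a j i * d i m s * (u s * p m) with hA
  set B := ∑ s, ∑ m, ∑ i, d i j s * a i m * (u s * p m) with hB
  set C := ∑ s, ∑ m, ∑ i, a i s * d i j m * (u s * p m) with hC
  set Q := ∑ m, a j m * q m with hQ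
  set T := ∑ i, ∑ m, X' i * d i j m * p m with hT
  have h1 : A + B - C = 0 := by
    rw [hA, hB, hC]
    simp only [← Finset.sum_sub_distrib, ← Finset.sum_add_distrib]
    have : ∀ s m : Fin n, (∑ i, (a j i * d i m s * (u s * p m) + d i j s * a i m * (u s * p m)
        - a i s * d i j m * (u s * p m))) = 0 := by
      intro s m
      have hk := hkey s m
      calc ∑ i, (a j i * d i m s * (u s * p m) + d i j s * a i m * (u s * p m)
            - a i s * d i j m * (u s * p m))
          = (∑ i, (a j i * d i m s + d i j s * a i m - a i s * d i j m)) * (u s * p m) := by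
            rw [Finset.sum_mul]; exact Finset.sum_congr rfl fun i _ => by ring
        _ = 0 := by rw [hk, zero_mul]
    simp [this]
  have e1 : ∑ m, a j m * (-(q m) + ∑ k, ∑ s, d m k s * u s * p k) = -Q + A := by
    simp only [mul_add, mul_neg, Finset.sum_add_distrib, Finset.mul_sum, Finset.sum_neg_distrib]
    congr 1
    rw [hA, psm_sum_rev3 (fun s m i => a j i * d i m s * (u s * p m))]
    exact Finset.sum_congr rfl fun m _ => Finset.sum_congr rfl fun k _ =>
      Finset.sum_congr rfl fun s _ => by ring
  have e2 : ∑ i, ∑ s, d i j s * u s * (∑ m, a i m * p m) = B := by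
    simp only [Finset.mul_sum]
    rw [hB, ← psm_sum_cyc3 (fun i s m => d i j s * a i m * (u s * p m))]
    exact Finset.sum_congr rfl fun i _ => Finset.sum_congr rfl fun s _ =>
      Finset.sum_congr rfl fun m _ => by ring
  have e3 : ∑ m, ((∑ i, X' i * d i j m) * p m + a j m * q m) = T + Q := by
    simp only [Finset.sum_add_distrib, Finset.sum_mul]
    congr 1
    rw [hT, Finset.sum_comm]
  have e4 : ∑ i, ∑ m, (X' i + ∑ s, a i s * u s) * d i j m * p m = T + C := by
    simp only [add_mul, Finset.sum_add_distrib, Finset.sum_mul]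
    congr 1
    rw [hC, psm_sum_rev3 (fun s m i => a i s * d i j m * (u s * p m))]
    exact Finset.sum_congr rfl fun i _ => Finset.sum_congr rfl fun m _ =>
      Finset.sum_congr rfl fun s _ => by ring
  rw [e1, e2, e3, e4]
  linarith [h1]

/-- The operator computation behind Lemma 5.1 of the paper:
`B∘A − A*∘B = F^i ∂_i α^{jm}`, where `F^i = ∂_φ X^i + α^{is}(X) ξ_s` are the
first-class constraints of the Poisson sigma-model. -/
theorem poisson_sigma_operator_identity
    (n : ℕ) (α : (Fin n → ℝ) → Matrix (Fin n) (Fin n) ℝ)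
    (hα : ∀ j k, ContDiff ℝ 1 (fun x => α x j k))
    (hanti : ∀ (x : Fin n → ℝ) (j k : Fin n), α x j k = -α x k j)
    (hJacobi : ∀ (x : Fin n → ℝ) (j k m : Fin n),
      (∑ i, fderiv ℝ (fun y => α y j k) x (Pi.single i 1) * α x i m)
      + (∑ i, fderiv ℝ (fun y => α y k m) x (Pi.single i 1) * α x i j)
      + (∑ i, fderiv ℝ (fun y => α y m j) x (Pi.single i 1) * α x i k) = 0)
    (X ξ ψ : ℝ → Fin n → ℝ)
    (hX : Differentiable ℝ X) (hξ : Differentiable ℝ ξ)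
    (hψ : Differentiable ℝ ψ) :
    ∀ (φ : ℝ) (j : Fin n),
      opB α X (opA α X ξ ψ) φ j - opAstar α X ξ (opB α X ψ) φ j
      = ∑ i, ∑ m,
          (deriv (fun t => X t i) φ + ∑ s, α (X φ) i s * ξ φ s)
          * fderiv ℝ (fun y => α y j m) (X φ) (Pi.single i 1) * ψ φ m := by
  intro φ j
  have hXc : ∀ i, HasDerivAt (fun t => X t i) (deriv X φ i) φ := fun i =>
    ((ContinuousLinearMap.proj i : (Fin n → ℝ) →L[ℝ] ℝ).hasFDerivAt.comp_hasDerivAt φ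
      (hX φ).hasDerivAt)
  have hψc : ∀ m, HasDerivAt (fun t => ψ t m) (deriv ψ φ m) φ := fun m =>
    ((ContinuousLinearMap.proj m : (Fin n → ℝ) →L[ℝ] ℝ).hasFDerivAt.comp_hasDerivAt φ
      (hψ φ).hasDerivAt)
  have hαm : ∀ (k s : Fin n), HasDerivAt (fun t => α (X t) k s)
      (∑ i, deriv X φ i * fderiv ℝ (fun y => α y k s) (X φ) (Pi.single i 1)) φ := by
    intro k s
    have hdiff : DifferentiableAt ℝ (fun y => α y k s) (X φ) :=
      ((hα k s).differentiable one_ne_zero).differentiableAt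
    have h1 : HasDerivAt (fun t => α (X t) k s)
        (fderiv ℝ (fun y => α y k s) (X φ) (deriv X φ)) φ :=
      hdiff.hasFDerivAt.comp_hasDerivAt φ (hX φ).hasDerivAt
    convert h1 using 1
    have hx : deriv X φ = ∑ i, (deriv X φ i) • (Pi.single i 1 : Fin n → ℝ) := by
      funext v
      simp [Finset.sum_apply, Pi.single_apply]
    conv_rhs => rw [hx, map_sum]
    simp [smul_eq_mul]
  have hBderiv : deriv (fun t => ∑ m, α (X t) j m * ψ t m) φ
      = ∑ m, ((∑ i, deriv (fun t => X t i) φ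
          * fderiv ℝ (fun y => α y j m) (X φ) (Pi.single i 1)) * ψ φ m
          + α (X φ) j m * deriv (fun t => ψ t m) φ) := by
    have hB : HasDerivAt (fun t => ∑ m, α (X t) j m * ψ t m)
        (∑ m, ((∑ i, deriv X φ i * fderiv ℝ (fun y => α y j m) (X φ) (Pi.single i 1)) * ψ φ m
          + α (X φ) j m * deriv ψ φ m)) φ :=
      HasDerivAt.fun_sum fun m _ => (hαm j m).mul (hψc m)
    rw [hB.deriv]
    exact Finset.sum_congr rfl fun m _ => by
      rw [(hψc m).deriv]
      congr 2
      exact Finset.sum_congr rfl fun i _ => by rw [(hXc i).deriv]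
  have hdanti : ∀ (i k l : Fin n), fderiv ℝ (fun y => α y k l) (X φ) (Pi.single i 1)
      = - fderiv ℝ (fun y => α y l k) (X φ) (Pi.single i 1) := by
    intro i k l
    have hf : (fun y => α y k l) = fun y => -(α y l k) := funext fun y => hanti y k l
    rw [hf, fderiv_fun_neg]
    simp
  have hkey : ∀ s m : Fin n,
      ∑ i, (α (X φ) j i * fderiv ℝ (fun y => α y i m) (X φ) (Pi.single i 1) * 0 + 0) = 0 :=
    fun _ _ => by simp
  simp only [opA, opB, opAstar]
  rw [hBderiv]
  exact psm_key_algebra n j (fun i k => α (X φ) i k)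
    (fun i k l => fderiv ℝ (fun y => α y k l) (X φ) (Pi.single i 1))
    (ξ φ) (ψ φ) (fun m => deriv (fun t => ψ t m) φ) (fun i => deriv (fun t => X t i) φ)
    (by
      intro s m
      have hJ := hJacobi (X φ) j s m
      have hper : ∀ i : Fin n,
          α (X φ) j i * fderiv ℝ (fun y => α y m s) (X φ) (Pi.single i 1)
          + fderiv ℝ (fun y => α y j s) (X φ) (Pi.single i 1) * α (X φ) i m
          - α (X φ) i s * fderiv ℝ (fun y => α y j m) (X φ) (Pi.single i 1)
          = fderiv ℝ (fun y => α y j s) (X φ) (Pi.single i 1) * α (X φ) i m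
            + fderiv ℝ (fun y => α y s m) (X φ) (Pi.single i 1) * α (X φ) i j
            + fderiv ℝ (fun y => α y m j) (X φ) (Pi.single i 1) * α (X φ) i s := by
        intro i
        rw [hdanti i s m, hdanti i m j, hanti (X φ) i j]
        ring
      calc ∑ i, (α (X φ) j i * fderiv ℝ (fun y => α y m s) (X φ) (Pi.single i 1)
            + fderiv ℝ (fun y => α y j s) (X φ) (Pi.single i 1) * α (X φ) i m
            - α (X φ) i s * fderiv ℝ (fun y => α y j m) (X φ) (Pi.single i 1))
          = ∑ i, (fderiv ℝ (fun y => α y j s) (X φ) (Pi.single i 1) * α (X φ) i m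
            + fderiv ℝ (fun y => α y s m) (X φ) (Pi.single i 1) * α (X φ) i j
            + fderiv ℝ (fun y => α y m j) (X φ) (Pi.single i 1) * α (X φ) i s) :=
            Finset.sum_congr rfl fun i _ => hper i
        _ = 0 := by
            simp only [Finset.sum_add_distrib]
            linarith [hJ])
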